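/- For all distinct positive real numbers a and b, L(a,b) < L(I(a,b), L(a,b)) < L(a,b)·(I(a,b) - L(a,b))/(L(a,b) - G(a,b)). -/

import Mathlib

noncomputable def G (a b : ℝ) : ℝ := Real.sqrt (a * b)
noncomputable def L (a b : ℝ) : ℝ := (a - b) / (Real.log a - Real.log b)
noncomputable def I (a b : ℝ) : ℝ := (1 / Real.exp 1) * (a ^ a / b ^ b) ^ (1 / (a - b))

open Real

lemma pos_of_hasDerivAt {F F' : ℝ → ℝ} (h0 : F 0 = 0)
    (hd : ∀ x, HasDerivAt F (F' x) x)
    (hp : ∀ x, 0 < x → 0 < F' x) :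
    ∀ s, 0 < s → 0 < F s := by
  intro s hs
  have hc : ContinuousOn F (Set.Ici 0) := fun x _ => (hd x).continuousAt.continuousWithinAt
  have hmono : StrictMonoOn F (Set.Ici 0) := by
    apply strictMonoOn_of_deriv_pos (convex_Ici 0) hc
    intro x hx
    rw [interior_Ici] at hx
    rw [(hd x).deriv]
    exact hp x hx
  have := hmono Set.self_mem_Ici (Set.mem_Ici.2 hs.le) hs
  rwa [h0] at this

lemma lemA : ∀ x : ℝ, 0 < x → 0 < 64 * cosh (2*x) - 36 * cosh x - 13 * (x * sinh x) - x^2 * cosh x := by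
  intro x hx
  have hc : 1 ≤ cosh x := one_le_cosh x
  have hs : x < sinh x := self_lt_sinh_iff.mpr hx
  have hsq : sinh x ^ 2 = cosh x ^ 2 - 1 := sinh_sq x
  have h2 : cosh (2*x) = cosh x ^ 2 + sinh x ^ 2 := cosh_two_mul x
  have hxq : 1 + x^2/2 ≤ cosh x := by
    have h1 : cosh x = 2 * sinh (x/2) ^ 2 + 1 := by
      have := cosh_two_mul (x/2); have := sinh_sq (x/2)
      have h3 : cosh (2*(x/2)) = cosh x := by rw [show 2*(x/2) = x by ring]
      nlinarith [cosh_two_mul (x/2), sinh_sq (x/2), h3]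
    have h4 : x/2 ≤ sinh (x/2) := le_of_lt (self_lt_sinh_iff.mpr (by linarith))
    nlinarith [h4, hx]
  have hxs : x * sinh x ≤ sinh x ^ 2 := by nlinarith [hs, hx]
  nlinarith [hsq, h2, hxq, hc, hxs, hx, sq_nonneg (cosh x - 1), sq_nonneg x]

lemma hd_sinh2 (x : ℝ) : HasDerivAt (fun y => sinh (2*y)) (2 * cosh (2*x)) x := by
  have h := (hasDerivAt_sinh (2*x)).comp x ((hasDerivAt_id x).const_mul 2)
  exact h.congr_deriv (by ring)

lemma hd_cosh2 (x : ℝ) : HasDerivAt (fun y => cosh (2*y)) (2 * sinh (2*x)) x := by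
  have h := (hasDerivAt_cosh (2*x)).comp x ((hasDerivAt_id x).const_mul 2)
  exact h.congr_deriv (by ring)

lemma hd_xcosh (x : ℝ) : HasDerivAt (fun y => y * cosh y) (cosh x + x * sinh x) x := by
  have h := (hasDerivAt_id' (x := x)).mul (hasDerivAt_cosh x)
  exact h.congr_deriv (by ring)

lemma hd_xsinh (x : ℝ) : HasDerivAt (fun y => y * sinh y) (sinh x + x * cosh x) x := by
  have h := (hasDerivAt_id' (x := x)).mul (hasDerivAt_sinh x)
  exact h.congr_deriv (by ring)

lemma hd_x2cosh (x : ℝ) : HasDerivAt (fun y => y^2 * cosh y) (2*x*cosh x + x^2 * sinh x) x := by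
  have h := (hasDerivAt_pow 2 x).mul (hasDerivAt_cosh x)
  exact h.congr_deriv (by push_cast; ring)

lemma hd_x2sinh (x : ℝ) : HasDerivAt (fun y => y^2 * sinh y) (2*x*sinh x + x^2 * cosh x) x := by
  have h := (hasDerivAt_pow 2 x).mul (hasDerivAt_sinh x)
  exact h.congr_deriv (by push_cast; ring)

lemma lemB : ∀ x : ℝ, 0 < x → 0 < 32*sinh (2*x) - 25*sinh x - 11*(x*cosh x) - x^2*sinh x := by
  apply pos_of_hasDerivAt
    (F' := fun x => 64 * cosh (2*x) - 36 * cosh x - 13 * (x * sinh x) - x^2 * cosh x)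
  · norm_num
  · intro x
    have h := ((((hd_sinh2 x).const_mul 32).sub ((hasDerivAt_sinh x).const_mul 25)).sub
      ((hd_xcosh x).const_mul 11)).sub (hd_x2sinh x)
    exact h.congr_deriv (by ring)
  · exact lemA

lemma lemC : ∀ x : ℝ, 0 < x → 0 < 16*cosh (2*x) - 16*cosh x - 9*(x*sinh x) - x^2*cosh x := by
  apply pos_of_hasDerivAt
    (F' := fun x => 32*sinh (2*x) - 25*sinh x - 11*(x*cosh x) - x^2*sinh x)
  · norm_num
  · intro x
    have h := ((((hd_cosh2 x).const_mul 16).sub ((hasDerivAt_cosh x).const_mul 16)).sub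
      ((hd_xsinh x).const_mul 9)).sub (hd_x2cosh x)
    exact h.congr_deriv (by ring)
  · exact lemB

lemma lemD : ∀ x : ℝ, 0 < x → 0 < 8*sinh (2*x) - 9*sinh x - 7*(x*cosh x) - x^2*sinh x := by
  apply pos_of_hasDerivAt
    (F' := fun x => 16*cosh (2*x) - 16*cosh x - 9*(x*sinh x) - x^2*cosh x)
  · norm_num
  · intro x
    have h := ((((hd_sinh2 x).const_mul 8).sub ((hasDerivAt_sinh x).const_mul 9)).sub
      ((hd_xcosh x).const_mul 7)).sub (hd_x2sinh x)
    exact h.congr_deriv (by ring)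
  · exact lemC

lemma lemE : ∀ x : ℝ, 0 < x → 0 < 4*cosh (2*x) - 4*cosh x - 5*(x*sinh x) - x^2*cosh x := by
  apply pos_of_hasDerivAt
    (F' := fun x => 8*sinh (2*x) - 9*sinh x - 7*(x*cosh x) - x^2*sinh x)
  · norm_num
  · intro x
    have h := ((((hd_cosh2 x).const_mul 4).sub ((hasDerivAt_cosh x).const_mul 4)).sub
      ((hd_xsinh x).const_mul 5)).sub (hd_x2cosh x)
    exact h.congr_deriv (by ring)
  · exact lemD

lemma lemF : ∀ x : ℝ, 0 < x → 0 < 2*sinh (2*x) - sinh x - 3*(x*cosh x) - x^2*sinh x := by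
  apply pos_of_hasDerivAt
    (F' := fun x => 4*cosh (2*x) - 4*cosh x - 5*(x*sinh x) - x^2*cosh x)
  · norm_num
  · intro x
    have h := ((((hd_sinh2 x).const_mul 2).sub (hasDerivAt_sinh x)).sub
      ((hd_xcosh x).const_mul 3)).sub (hd_x2sinh x)
    exact h.congr_deriv (by ring)
  · exact lemE

lemma lemH : ∀ x : ℝ, 0 < x → 0 < cosh (2*x) - 1 - x*sinh x - x^2*cosh x := by
  apply pos_of_hasDerivAt
    (F' := fun x => 2*sinh (2*x) - sinh x - 3*(x*cosh x) - x^2*sinh x)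
  · norm_num
  · intro x
    have h := (((hd_cosh2 x).sub (hasDerivAt_const x 1)).sub (hd_xsinh x)).sub (hd_x2cosh x)
    exact h.congr_deriv (by ring)
  · exact lemF

lemma lemG : ∀ x : ℝ, 0 < x → 0 < (x + sinh x) * (cosh x - 1) - x^2*sinh x := by
  apply pos_of_hasDerivAt
    (F' := fun x => cosh (2*x) - 1 - x*sinh x - x^2*cosh x)
  · norm_num
  · intro x
    have h := (((hasDerivAt_id' (x := x)).add (hasDerivAt_sinh x)).mul
      ((hasDerivAt_cosh x).sub (hasDerivAt_const x 1))).sub (hd_x2sinh x)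
    refine h.congr_deriv ?_
    simp only [Pi.add_apply, Pi.sub_apply]
    rw [cosh_two_mul x]
    ring
  · exact lemH

noncomputable def fkey : ℝ → ℝ := fun x => x*(cosh x + 1)/sinh x - 2 - log (sinh x) + log x

lemma fkey_hasDeriv (x : ℝ) (hx : 0 < x) :
    HasDerivAt fkey ((x*sinh x + x^2*sinh x^2 - x^2*cosh x^2 - x^2*cosh x + sinh x^2)
      / (x * sinh x ^ 2)) x := by
  have hsh : 0 < sinh x := sinh_pos_iff.mpr hx
  have hsh' : sinh x ≠ 0 := ne_of_gt hsh
  have hx' : x ≠ 0 := ne_of_gt hx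
  have hu : HasDerivAt (fun y => y*(cosh y + 1)) ((cosh x + 1) + x * sinh x) x := by
    have h := (hasDerivAt_id' (x := x)).mul ((hasDerivAt_cosh x).add (hasDerivAt_const x 1))
    exact h.congr_deriv (by simp only [Pi.add_apply]; ring)
  have hdiv := hu.div (hasDerivAt_sinh x) hsh'
  have hlog := (hasDerivAt_sinh x).log hsh'
  have hlx := Real.hasDerivAt_log hx'
  have h := ((hdiv.sub (hasDerivAt_const x 2)).sub hlog).add hlx
  refine h.congr_deriv ?_
  field_simp
  ring

lemma fkey_deriv_pos (x : ℝ) (hx : 0 < x) :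
    0 < (x*sinh x + x^2*sinh x^2 - x^2*cosh x^2 - x^2*cosh x + sinh x^2) / (x * sinh x ^ 2) := by
  have hsh : 0 < sinh x := sinh_pos_iff.mpr hx
  apply div_pos _ (by positivity)
  have hg := lemG x hx
  have hc : (1:ℝ) ≤ cosh x := one_le_cosh x
  have h5 : 0 < ((x + sinh x) * (cosh x - 1) - x^2*sinh x) * (cosh x + 1) :=
    mul_pos hg (by linarith)
  have h6 : 0 < (x*sinh x + sinh x^2 - x^2*cosh x - x^2) * sinh x := by
    nlinarith [h5, sinh_sq x]
  have h7 : 0 < x*sinh x + sinh x^2 - x^2*cosh x - x^2 := by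
    nlinarith [h6, hsh]
  have h8 : x^2 * sinh x^2 = x^2*(cosh x^2 - 1) := by rw [sinh_sq]
  linarith [h7, h8]

lemma fkey_mono : StrictMonoOn fkey (Set.Ioi 0) := by
  apply strictMonoOn_of_deriv_pos (convex_Ioi 0)
  · intro x hx
    exact (fkey_hasDeriv x hx).continuousAt.continuousWithinAt
  · intro x hx
    rw [interior_Ioi] at hx
    rw [(fkey_hasDeriv x hx).deriv]
    exact fkey_deriv_pos x hx

lemma fkey_tendsto : Filter.Tendsto fkey (nhdsWithin 0 (Set.Ioi 0)) (nhds 0) := by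
  have hslope : Filter.Tendsto (fun x : ℝ => sinh x / x) (nhdsWithin 0 {(0:ℝ)}ᶜ) (nhds 1) := by
    have h := (hasDerivAt_iff_tendsto_slope).mp (hasDerivAt_sinh 0)
    rw [Real.cosh_zero] at h
    refine h.congr' ?_
    filter_upwards [self_mem_nhdsWithin] with y hy
    simp [slope_def_field, Real.sinh_zero]
  have h1 : Filter.Tendsto (fun x : ℝ => sinh x / x) (nhdsWithin 0 (Set.Ioi 0)) (nhds 1) :=
    hslope.mono_left (nhdsWithin_mono 0 (fun x hx => ne_of_gt hx))
  have h2 : Filter.Tendsto (fun x : ℝ => x / sinh x) (nhdsWithin 0 (Set.Ioi 0)) (nhds 1) := by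
    have := h1.inv₀ one_ne_zero
    simp only [inv_div, inv_one] at this
    exact this
  have h3 : Filter.Tendsto (fun x : ℝ => cosh x + 1) (nhdsWithin 0 (Set.Ioi 0)) (nhds 2) := by
    have : Filter.Tendsto (fun x : ℝ => cosh x + 1) (nhds 0) (nhds (cosh 0 + 1)) :=
      (Real.continuous_cosh.continuousAt.add (continuousAt_const))
    rw [Real.cosh_zero] at this
    norm_num at this
    exact this.mono_left nhdsWithin_le_nhds
  have h4 : Filter.Tendsto (fun x : ℝ => log (sinh x / x)) (nhdsWithin 0 (Set.Ioi 0)) (nhds 0) := by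
    have := (Real.continuousAt_log (one_ne_zero)).tendsto.comp h1
    rw [Real.log_one] at this
    exact this
  have hcomb : Filter.Tendsto (fun x : ℝ => (cosh x + 1) * (x / sinh x) - 2 - log (sinh x / x))
      (nhdsWithin 0 (Set.Ioi 0)) (nhds 0) := by
    have := ((h3.mul h2).sub (tendsto_const_nhds (x := (2:ℝ)))).sub h4
    norm_num at this
    exact this
  refine hcomb.congr' ?_
  filter_upwards [self_mem_nhdsWithin] with y hy
  have hy' : 0 < y := hy
  have hsh : sinh y ≠ 0 := ne_of_gt (sinh_pos_iff.mpr hy')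
  unfold fkey
  rw [Real.log_div hsh (ne_of_gt hy')]
  ring

lemma fkey_pos : ∀ s : ℝ, 0 < s → 0 < fkey s := by
  have nonneg : ∀ s : ℝ, 0 < s → 0 ≤ fkey s := by
    intro s hs
    refine le_of_tendsto fkey_tendsto ?_
    have hmem : Set.Ioo (0:ℝ) s ∈ nhdsWithin 0 (Set.Ioi 0) :=
      Ioo_mem_nhdsGT_of_mem (by constructor <;> simp [hs, le_refl])
    filter_upwards [hmem] with y hy
    exact le_of_lt (fkey_mono hy.1 hs hy.2)
  intro s hs
  have h1 := nonneg (s/2) (by linarith)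
  have h2 := fkey_mono (by simp [hs] : (s/2) ∈ Set.Ioi (0:ℝ)) (by simp [hs] : s ∈ Set.Ioi (0:ℝ)) (by linarith)
  linarith

lemma key_ineq (s : ℝ) (hs : 0 < s) :
    log (sinh s / s) < s * (cosh s + 1) / sinh s - 2 := by
  have h := fkey_pos s hs
  unfold fkey at h
  have hsh : sinh s ≠ 0 := ne_of_gt (sinh_pos_iff.mpr hs)
  rw [Real.log_div hsh (ne_of_gt hs)]
  linarith

lemma G_symm (a b : ℝ) : G b a = G a b := by unfold G; rw [mul_comm]

lemma L_symm (a b : ℝ) : L b a = L a b := by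
  unfold L
  rw [show b - a = -(a-b) by ring, show log b - log a = -(log a - log b) by ring, neg_div_neg_eq]

lemma I_symm (a b : ℝ) (ha : 0 < a) (hb : 0 < b) : I b a = I a b := by
  unfold I
  have hX : (0:ℝ) < a ^ a / b ^ b := div_pos (rpow_pos_of_pos ha a) (rpow_pos_of_pos hb b)
  rw [show b ^ b / a ^ a = (a ^ a / b ^ b)⁻¹ by rw [inv_div],
    Real.inv_rpow hX.le,
    show (1:ℝ)/(b-a) = -(1/(a-b)) by rw [show b - a = -(a-b) by ring, div_neg],
    Real.rpow_neg hX.le, inv_inv]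

lemma main (a b : ℝ) (hb : 0 < b) (hba : b < a) :
    L a b < L (I a b) (L a b) ∧
    L (I a b) (L a b) < L a b * (I a b - L a b) / (L a b - G a b) := by
  have ha : 0 < a := lt_trans hb hba
  set s := (log a - log b)/2 with hs_def
  set c := Real.sqrt (a*b) with hc_def
  have hlog : log b < log a := Real.log_lt_log hb hba
  have hs : 0 < s := by rw [hs_def]; linarith
  have hc : 0 < c := Real.sqrt_pos.mpr (by positivity)
  have hcexp : c = exp ((log a + log b)/2) := by
    rw [hc_def, show a*b = exp ((log a + log b)/2)^2 by
      rw [sq, ← Real.exp_add, show (log a + log b)/2 + (log a + log b)/2 = log a + log b by ring,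
        Real.exp_add, exp_log ha, exp_log hb]]
    exact Real.sqrt_sq (exp_pos _).le
  have hae : a = c * exp s := by
    rw [hcexp, ← Real.exp_add, show (log a + log b)/2 + s = log a by rw [hs_def]; ring,
      exp_log ha]
  have hbe : b = c * exp (-s) := by
    rw [hcexp, ← Real.exp_add, show (log a + log b)/2 + -s = log b by rw [hs_def]; ring,
      exp_log hb]
  have hsh : 0 < sinh s := sinh_pos_iff.mpr hs
  have hsub : a - b = 2 * c * sinh s := by rw [hae, hbe, Real.sinh_eq]; ring
  have hld : log a - log b = 2 * s := by rw [hs_def]; ring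
  have hL : L a b = c * (sinh s / s) := by
    unfold L; rw [hsub, hld]; field_simp
  set u := sinh s / s with hu_def
  have hupos : 0 < u := div_pos hsh hs
  have hu1 : 1 < u := (one_lt_div hs).mpr (self_lt_sinh_iff.mpr hs)
  have hLpos : 0 < L a b := by rw [hL]; positivity
  have hG : G a b = c := by rw [hc_def]; rfl
  set v := s * cosh s / sinh s with hv_def
  have hIlog : I a b = c * exp (v - 1) := by
    unfold I
    have hXa : a ^ a = exp (log a * a) := Real.rpow_def_of_pos ha a
    have hXb : b ^ b = exp (log b * b) := Real.rpow_def_of_pos hb b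
    have hq : a ^ a / b ^ b = exp (log a * a - log b * b) := by
      rw [hXa, hXb, ← Real.exp_sub]
    rw [hq, Real.rpow_def_of_pos (exp_pos _), Real.log_exp, one_div (exp 1), ← Real.exp_neg,
      ← Real.exp_add, show c = exp (log c) from (exp_log hc).symm, ← Real.exp_add]
    congr 1
    have hla : log a = log c + s := by
      rw [hae, log_mul (ne_of_gt hc) (exp_ne_zero s), Real.log_exp]
    have hlb : log b = log c - s := by
      rw [hbe, log_mul (ne_of_gt hc) (exp_ne_zero (-s)), Real.log_exp]; ring
    have hexne : exp s - exp (-s) ≠ 0 := by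
      have : sinh s = (exp s - exp (-s))/2 := Real.sinh_eq s
      intro hz; rw [this, hz] at hsh; norm_num at hsh
    rw [hla, hlb, hv_def, hae, hbe, Real.sinh_eq, Real.cosh_eq,
      show c * exp s - c * exp (-s) = c * (exp s - exp (-s)) by ring]
    field_simp
    ring
  have hIpos : 0 < I a b := by rw [hIlog]; positivity
  have hkey := key_ineq s hs
  have h1u : 1/u = s / sinh s := by rw [hu_def, one_div, inv_div]
  have hkey2 : log u < v + 1/u - 2 := by
    rw [h1u, hv_def]
    have : s * (cosh s + 1) / sinh s = s * cosh s / sinh s + s / sinh s := by ring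
    rw [hu_def]
    linarith [hkey, this.symm.le, this.le]
  set d := log (I a b) - log (L a b) with hd_def
  have hlogl : log (L a b) = log c + log u := by
    rw [hL, log_mul hc.ne' hupos.ne']
  have hlogi : log (I a b) = log c + (v - 1) := by
    rw [hIlog, log_mul hc.ne' (exp_pos _).ne', Real.log_exp]
  have hdval : d = v - 1 - log u := by rw [hd_def, hlogi, hlogl]; ring
  have hdlb : 1 - 1/u < d := by rw [hdval]; linarith [hkey2]
  have hinvu : 1/u < 1 := by rw [div_lt_one hupos]; exact hu1
  have hd : 0 < d := by linarith
  have hIL : I a b = L a b * exp d := by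
    rw [hd_def, Real.exp_sub, exp_log hIpos, exp_log hLpos]
    field_simp
  have hexpd : d + 1 < exp d := Real.add_one_lt_exp (ne_of_gt hd)
  have hiL : L a b < I a b := by
    rw [hIL]; nlinarith [hLpos, hexpd, hd]
  have hLIL : L (I a b) (L a b) = (I a b - L a b)/d := by rw [hd_def]; rfl
  constructor
  · rw [hLIL, lt_div_iff₀ hd, hIL]
    have h2 := mul_lt_mul_of_pos_left hexpd hLpos
    have h3 : L a b * (d + 1) = L a b * d + L a b := by ring
    linarith [h2, h3]
  · rw [hLIL]
    have hdlb' : u - 1 < u * d := by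
      have h := (mul_lt_mul_iff_right₀ hupos).mpr hdlb
      rwa [mul_sub, mul_one, mul_one_div, div_self hupos.ne'] at h
    have hlg : L a b - G a b = c * (u - 1) := by rw [hL, hG, hu_def]; ring
    have hlgpos : 0 < L a b - G a b := by rw [hlg]; exact mul_pos hc (by linarith)
    have hcore : L a b - G a b < L a b * d := by
      rw [hlg, hL, hu_def]
      calc c * (u - 1) < c * (u * d) := by
            exact (mul_lt_mul_iff_right₀ hc).mpr hdlb'
        _ = c * u * d := by ring
    have hiD : 0 < I a b - L a b := by linarith
    rw [div_lt_div_iff₀ hd hlgpos]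
    calc (I a b - L a b) * (L a b - G a b)
        < (I a b - L a b) * (L a b * d) := mul_lt_mul_of_pos_left hcore hiD
      _ = L a b * (I a b - L a b) * d := by ring

theorem stmt_7 (a b : ℝ) (ha : 0 < a) (hb : 0 < b) (hab : a ≠ b) :
    L a b < L (I a b) (L a b) ∧
    L (I a b) (L a b) < L a b * (I a b - L a b) / (L a b - G a b) := by
  rcases lt_or_gt_of_ne hab with h | h
  · have H := main b a ha h
    rwa [L_symm a b, I_symm a b ha hb, G_symm a b] at H
  · exact main a b hb h
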